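/- arXiv:1407.6822 — 3 statements merged into one kernel-verified Lean document; each statement's English description precedes it below -/
import Mathlib

section
/- In two variables, the sequence R → P_r → (P_{r-1})^2 → P_{r-2} → 0 given by the inclusion of constants, the vector rot (rot q = (∂q/∂y, −∂q/∂x)), and the divergence is exact. -/
open MvPolynomial

/-- Formal antiderivative in variable `i`. -/
noncomputable def integ (i : Fin 2) (p : MvPolynomial (Fin 2) ℝ) : MvPolynomial (Fin 2) ℝ :=
  Finsupp.sum (AddMonoidAlgebra.coeff p) fun m a => monomial (m + Finsupp.single i 1) (a / (m i + 1))

/-- Truncation to monomials not involving variable `i`. -/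
noncomputable def sect (i : Fin 2) (p : MvPolynomial (Fin 2) ℝ) : MvPolynomial (Fin 2) ℝ :=
  Finsupp.sum (AddMonoidAlgebra.coeff p) fun m a => if m i = 0 then monomial m a else 0

lemma integ_monomial (i : Fin 2) (m : Fin 2 →₀ ℕ) (a : ℝ) :
    integ i (monomial m a) = monomial (m + Finsupp.single i 1) (a / (m i + 1)) :=
  sum_monomial_eq (by simp)

lemma sect_monomial (i : Fin 2) (m : Fin 2 →₀ ℕ) (a : ℝ) :
    sect i (monomial m a) = if m i = 0 then monomial m a else 0 :=
  sum_monomial_eq (by split <;> simp)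

lemma integ_add (i : Fin 2) (p q : MvPolynomial (Fin 2) ℝ) :
    integ i (p + q) = integ i p + integ i q :=
  Finsupp.sum_add_index' (by simp) (fun m a b => by rw [add_div, map_add])

lemma sect_add (i : Fin 2) (p q : MvPolynomial (Fin 2) ℝ) :
    sect i (p + q) = sect i p + sect i q :=
  Finsupp.sum_add_index' (by simp) (fun m a b => by split <;> simp)

lemma integ_zero (i : Fin 2) : integ i 0 = 0 := Finsupp.sum_zero_index

lemma integ_neg (i : Fin 2) (p : MvPolynomial (Fin 2) ℝ) : integ i (-p) = - integ i p := by
  have := integ_add i (-p) p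
  rw [neg_add_cancel, integ_zero] at this
  exact eq_neg_of_add_eq_zero_left this.symm

lemma pderiv_integ (i : Fin 2) (p : MvPolynomial (Fin 2) ℝ) :
    pderiv i (integ i p) = p := by
  induction p using MvPolynomial.induction_on' with
  | add p q hp hq => rw [integ_add, map_add, hp, hq]
  | monomial m a =>
    rw [integ_monomial, pderiv_monomial]
    have h1 : (m + Finsupp.single i 1) - Finsupp.single i 1 = m := add_tsub_cancel_right ..
    have h2 : ((m + Finsupp.single i 1 : Fin 2 →₀ ℕ)) i = m i + 1 := by simp
    rw [h1, h2]
    congr 1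
    push_cast
    field_simp

lemma pderiv_sect (i : Fin 2) (p : MvPolynomial (Fin 2) ℝ) :
    pderiv i (sect i p) = 0 := by
  induction p using MvPolynomial.induction_on' with
  | add p q hp hq => rw [sect_add, map_add, hp, hq, add_zero]
  | monomial m a =>
    rw [sect_monomial]
    split
    · next h => rw [pderiv_monomial, h]; simp
    · simp

lemma integ_pderiv_add_sect (i : Fin 2) (p : MvPolynomial (Fin 2) ℝ) :
    integ i (pderiv i p) + sect i p = p := by
  induction p using MvPolynomial.induction_on' with
  | add p q hp hq =>
    rw [map_add, integ_add, sect_add]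
    rw [show ∀ a b c d : MvPolynomial (Fin 2) ℝ, a + b + (c + d) = (a + c) + (b + d) by intros; ring]
    rw [hp, hq]
  | monomial m a =>
    rw [pderiv_monomial, sect_monomial]
    by_cases h : m i = 0
    · rw [if_pos h, h]
      simp [integ_zero]
    · rw [if_neg h, add_zero, integ_monomial]
      obtain ⟨k, hk⟩ : ∃ k, m i = k + 1 := ⟨m i - 1, by omega⟩
      have h1 : ((m - Finsupp.single i 1 : Fin 2 →₀ ℕ)) i = k := by simp [hk]
      have h2 : (m - Finsupp.single i 1) + Finsupp.single i 1 = m := by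
        apply tsub_add_cancel_of_le
        rw [Finsupp.single_le_iff]; omega
      rw [h1, h2, hk]
      congr 1
      push_cast
      field_simp

lemma pderiv_integ_comm {i j : Fin 2} (hij : j ≠ i) (p : MvPolynomial (Fin 2) ℝ) :
    pderiv j (integ i p) = integ i (pderiv j p) := by
  induction p using MvPolynomial.induction_on' with
  | add p q hp hq => rw [integ_add, map_add, map_add, integ_add, hp, hq]
  | monomial m a =>
    rw [integ_monomial, pderiv_monomial, pderiv_monomial, integ_monomial]
    have h1 : ((m + Finsupp.single i 1 : Fin 2 →₀ ℕ)) j = m j := by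
      simp [Finsupp.single_apply, hij.symm]
    have h2 : ((m - Finsupp.single j 1 : Fin 2 →₀ ℕ)) i = m i := by
      simp [Finsupp.single_apply, hij]
    have h3 : (m + Finsupp.single i 1) - Finsupp.single j 1
        = (m - Finsupp.single j 1) + Finsupp.single i 1 := by
      ext k
      simp only [Finsupp.add_apply, Finsupp.tsub_apply, Finsupp.single_apply]
      split_ifs <;> omega
    rw [h1, h2, h3]
    congr 1
    ring

lemma pderiv_pderiv_comm (p : MvPolynomial (Fin 2) ℝ) :
    pderiv 0 (pderiv 1 p) = pderiv 1 (pderiv 0 p) := by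
  induction p using MvPolynomial.induction_on' with
  | add p q hp hq => rw [map_add, map_add, map_add, map_add, hp, hq]
  | monomial m a =>
    rw [pderiv_monomial, pderiv_monomial, pderiv_monomial, pderiv_monomial]
    have h1 : ((m - Finsupp.single 1 1 : Fin 2 →₀ ℕ)) 0 = m 0 := by
      simp [Finsupp.single_apply]
    have h2 : ((m - Finsupp.single 0 1 : Fin 2 →₀ ℕ)) 1 = m 1 := by
      simp [Finsupp.single_apply]
    have h3 : m - Finsupp.single 1 1 - Finsupp.single 0 1
        = m - Finsupp.single 0 1 - Finsupp.single 1 1 := by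
      rw [tsub_tsub, tsub_tsub, add_comm]
    rw [h1, h2, h3]
    congr 1
    ring

lemma totalDegree_integ_le (i : Fin 2) (p : MvPolynomial (Fin 2) ℝ) :
    (integ i p).totalDegree ≤ p.totalDegree + 1 := by
  apply Finset.sup_le
  intro m hm
  have hsub : (integ i p).support ⊆
      p.support.biUnion fun m' =>
        (monomial (m' + Finsupp.single i 1) (p.coeff m' / (m' i + 1))).support :=
    MvPolynomial.support_sum
  obtain ⟨m', hm', hmm⟩ := Finset.mem_biUnion.mp (hsub hm)
  have : m = m' + Finsupp.single i 1 := by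
    by_contra h
    exact h (Finset.mem_singleton.mp (MvPolynomial.support_monomial_subset hmm))
  subst this
  have hdeg : ((m' + Finsupp.single i 1 : Fin 2 →₀ ℕ).sum fun _ e => e)
      = (m'.sum fun _ e => e) + 1 := by
    rw [Finsupp.sum_add_index' (fun _ => rfl) (fun _ _ _ => rfl),
      Finsupp.sum_single_index rfl]
  rw [hdeg]
  exact Nat.add_le_add_right (MvPolynomial.le_totalDegree hm') 1

lemma support_sect (i : Fin 2) (p : MvPolynomial (Fin 2) ℝ) {m : Fin 2 →₀ ℕ}
    (hm : m ∈ (sect i p).support) : m ∈ p.support ∧ m i = 0 := by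
  have hsub : (sect i p).support ⊆
      p.support.biUnion fun m' =>
        (if m' i = 0 then monomial m' (p.coeff m') else 0).support :=
    MvPolynomial.support_sum
  obtain ⟨m', hm', hmm⟩ := Finset.mem_biUnion.mp (hsub hm)
  by_cases h : m' i = 0
  · rw [if_pos h] at hmm
    have := Finset.mem_singleton.mp (MvPolynomial.support_monomial_subset hmm)
    subst this
    exact ⟨hm', h⟩
  · rw [if_neg h] at hmm
    simp at hmm

lemma totalDegree_sect_le (i : Fin 2) (p : MvPolynomial (Fin 2) ℝ) :
    (sect i p).totalDegree ≤ p.totalDegree := by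
  apply Finset.sup_le
  intro m hm
  exact MvPolynomial.le_totalDegree (support_sect i p hm).1

lemma eq_C_of_pderivs (p : MvPolynomial (Fin 2) ℝ)
    (h0 : pderiv 0 p = 0) (h1 : pderiv 1 p = 0) : ∃ c : ℝ, p = C c := by
  have e0 : p = sect 0 p := by
    conv_lhs => rw [← integ_pderiv_add_sect 0 p]
    rw [h0, integ_zero, zero_add]
  have e1 : p = sect 1 p := by
    conv_lhs => rw [← integ_pderiv_add_sect 1 p]
    rw [h1, integ_zero, zero_add]
  have hsupp : p.support ⊆ {0} := by
    intro m hm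
    have a0 : m 0 = 0 := (support_sect 0 p (e0 ▸ hm)).2
    have a1 : m 1 = 0 := (support_sect 1 p (e1 ▸ hm)).2
    have : m = 0 := by
      ext k
      fin_cases k
      · exact a0
      · exact a1
    simp [this]
  rcases Finset.subset_singleton_iff.mp hsupp with h | h
  · exact ⟨0, by rw [map_zero]; exact (MvPolynomial.support_eq_empty.mp h)⟩
  · refine ⟨p.coeff 0, ?_⟩
    conv_lhs => rw [p.as_sum, h]
    rw [Finset.sum_singleton, MvPolynomial.C_apply]

/-- `degLE n p` means `p ∈ P_n`, with the convention `P_n = {0}` for `n < 0`. -/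
def degLE (n : ℤ) (p : MvPolynomial (Fin 2) ℝ) : Prop :=
  if 0 ≤ n then p.totalDegree ≤ n.toNat else p = 0

/-- The vector rot of a scalar: `rot q = (∂q/∂y, −∂q/∂x)`. -/
noncomputable def vrot (q : MvPolynomial (Fin 2) ℝ) : Fin 2 → MvPolynomial (Fin 2) ℝ :=
  ![pderiv 1 q, -pderiv 0 q]

lemma degLE_zero (n : ℤ) : degLE n 0 := by
  rw [degLE]; split
  · simp
  · rfl

/-- Exactness of `ℝ → P_r → (P_{r-1})² → P_{r-2} → 0` (inclusion of constants, vector rot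
`rot q = (∂q/∂y, −∂q/∂x)`, divergence) in two variables. -/
theorem rot_div_exact_2d (r : ℕ) :
    (∀ p : MvPolynomial (Fin 2) ℝ, p.totalDegree ≤ r →
      (vrot p = 0 ↔ ∃ c : ℝ, p = C c)) ∧
    (∀ v : Fin 2 → MvPolynomial (Fin 2) ℝ, (∀ i, degLE ((r : ℤ) - 1) (v i)) →
      (pderiv 0 (v 0) + pderiv 1 (v 1) = 0 ↔
        ∃ p : MvPolynomial (Fin 2) ℝ, p.totalDegree ≤ r ∧ v = vrot p)) ∧
    (∀ q : MvPolynomial (Fin 2) ℝ, degLE ((r : ℤ) - 2) q →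
      ∃ v : Fin 2 → MvPolynomial (Fin 2) ℝ, (∀ i, degLE ((r : ℤ) - 1) (v i)) ∧
        pderiv 0 (v 0) + pderiv 1 (v 1) = q) := by
  refine ⟨?_, ?_, ?_⟩
  · -- exactness at P_r
    intro p _
    constructor
    · intro h
      have h1 : pderiv 1 p = 0 := by
        have := congrFun h 0; simpa [vrot] using this
      have h0 : pderiv 0 p = 0 := by
        have := congrFun h 1; simpa [vrot] using this
      exact eq_C_of_pderivs p h0 h1
    · rintro ⟨c, rfl⟩
      funext i; fin_cases i <;> simp [vrot]
  · -- exactness at (P_{r-1})²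
    intro v hv
    constructor
    · intro h
      by_cases hr : r = 0
      · subst hr
        have hv0 : v 0 = 0 := by
          have := hv 0; rwa [degLE, if_neg (by norm_num)] at this
        have hv1 : v 1 = 0 := by
          have := hv 1; rwa [degLE, if_neg (by norm_num)] at this
        refine ⟨0, by simp, ?_⟩
        funext i; fin_cases i <;> simp [vrot, hv0, hv1]
      · have hr1 : 1 ≤ r := Nat.one_le_iff_ne_zero.mpr hr
        have htn : ((r : ℤ) - 1).toNat = r - 1 := by omega
        have hd0 : (v 0).totalDegree ≤ r - 1 := by
          have := hv 0; rwa [degLE, if_pos (by omega), htn] at this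
        have hd1 : (v 1).totalDegree ≤ r - 1 := by
          have := hv 1; rwa [degLE, if_pos (by omega), htn] at this
        refine ⟨integ 1 (v 0) - integ 0 (sect 1 (v 1)), ?_, ?_⟩
        · rw [sub_eq_add_neg]
          refine le_trans (MvPolynomial.totalDegree_add _ _) (max_le ?_ ?_)
          · exact le_trans (totalDegree_integ_le 1 (v 0)) (by omega)
          · rw [MvPolynomial.totalDegree_neg]
            refine le_trans (totalDegree_integ_le 0 _) ?_
            have := totalDegree_sect_le 1 (v 1)
            omega
        · have key1 : pderiv 1 (integ 1 (v 0) - integ 0 (sect 1 (v 1))) = v 0 := by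
            rw [map_sub, pderiv_integ, pderiv_integ_comm (by decide), pderiv_sect,
              integ_zero, sub_zero]
          have h' : pderiv 0 (v 0) = -pderiv 1 (v 1) := eq_neg_of_add_eq_zero_left h
          have key0 : pderiv 0 (integ 1 (v 0) - integ 0 (sect 1 (v 1))) = -(v 1) := by
            rw [map_sub, pderiv_integ_comm (by decide), h', integ_neg, pderiv_integ]
            have := integ_pderiv_add_sect 1 (v 1)
            linear_combination -this
          funext i; fin_cases i
          · simpa [vrot] using key1.symm
          · show v 1 = -(pderiv 0 (integ 1 (v 0) - integ 0 (sect 1 (v 1))))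
            rw [key0, neg_neg]
    · rintro ⟨p, _, rfl⟩
      show pderiv 0 (vrot p 0) + pderiv 1 (vrot p 1) = 0
      simp only [vrot, Matrix.cons_val_zero, Matrix.cons_val_one, Matrix.head_cons, map_neg]
      rw [pderiv_pderiv_comm]
      ring
  · -- exactness at P_{r-2}
    intro q hq
    by_cases hr : 2 ≤ r
    · have htn2 : ((r : ℤ) - 2).toNat = r - 2 := by omega
      have hdq : q.totalDegree ≤ r - 2 := by
        rwa [degLE, if_pos (by omega), htn2] at hq
      refine ⟨![integ 0 q, 0], ?_, ?_⟩
      · intro i; fin_cases i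
        · show degLE ((r : ℤ) - 1) (integ 0 q)
          rw [degLE, if_pos (by omega)]
          have := totalDegree_integ_le 0 q
          omega
        · exact degLE_zero _
      · show pderiv 0 (integ 0 q) + pderiv 1 0 = q
        rw [pderiv_integ, map_zero, add_zero]
    · have hq0 : q = 0 := by
        rwa [degLE, if_neg (by omega)] at hq
      subst hq0
      exact ⟨0, fun i => degLE_zero _, by simp⟩
end

section
/- In three variables, a vector polynomial v ∈ (P_s)^3 satisfies div v = 0 if and only if v = curl w for some w ∈ (P_{s+1})^3. -/
open MvPolynomial

/-- The three-dimensional curl of a polynomial vector field. -/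
noncomputable def curl3 (v : Fin 3 → MvPolynomial (Fin 3) ℝ) : Fin 3 → MvPolynomial (Fin 3) ℝ :=
  ![pderiv 1 (v 2) - pderiv 2 (v 1),
    pderiv 2 (v 0) - pderiv 0 (v 2),
    pderiv 0 (v 1) - pderiv 1 (v 0)]

/-- Polynomial antiderivative in variable `j`, normalized to vanish when `X j = 0`. -/
noncomputable def pint (j : Fin 3) (p : MvPolynomial (Fin 3) ℝ) : MvPolynomial (Fin 3) ℝ :=
  (AddMonoidAlgebra.coeff p).sum fun a c => monomial (a + Finsupp.single j 1) (c / (a j + 1))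

/-- Substitute `X j := 0`. -/
noncomputable def atZero (j : Fin 3) (p : MvPolynomial (Fin 3) ℝ) : MvPolynomial (Fin 3) ℝ :=
  (AddMonoidAlgebra.coeff p).sum fun a c => if a j = 0 then monomial a c else 0

lemma pint_monomial (j : Fin 3) (a : Fin 3 →₀ ℕ) (c : ℝ) :
    pint j (monomial a c) = monomial (a + Finsupp.single j 1) (c / (a j + 1)) := by
  unfold pint; rw [sum_monomial_eq]; simp

lemma atZero_monomial (j : Fin 3) (a : Fin 3 →₀ ℕ) (c : ℝ) :
    atZero j (monomial a c) = if a j = 0 then monomial a c else 0 := by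
  unfold atZero; rw [sum_monomial_eq]; simp

lemma pint_add (j : Fin 3) (p q : MvPolynomial (Fin 3) ℝ) :
    pint j (p + q) = pint j p + pint j q := by
  unfold pint
  rw [AddMonoidAlgebra.coeff_add, Finsupp.sum_add_index']
  · intro a; simp
  · intro a b₁ b₂; rw [add_div, map_add]

lemma atZero_add (j : Fin 3) (p q : MvPolynomial (Fin 3) ℝ) :
    atZero j (p + q) = atZero j p + atZero j q := by
  unfold atZero
  rw [AddMonoidAlgebra.coeff_add, Finsupp.sum_add_index']
  · intro a; simp
  · intro a b₁ b₂; split <;> simp [map_add]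

lemma pderiv_pint_self (j : Fin 3) (p : MvPolynomial (Fin 3) ℝ) :
    pderiv j (pint j p) = p := by
  induction p using MvPolynomial.induction_on' with
  | monomial a c =>
    rw [pint_monomial, pderiv_monomial]
    rw [show a + Finsupp.single j 1 - Finsupp.single j 1 = a from by
      ext k
      simp only [Finsupp.coe_tsub, Finsupp.coe_add, Pi.sub_apply, Pi.add_apply,
        Finsupp.single_apply]
      split <;> omega]
    simp only [Finsupp.add_apply, Finsupp.single_eq_same]
    congr 1
    have h0 : (a j : ℝ) + 1 ≠ 0 := by positivity
    push_cast
    field_simp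
  | add p q hp hq => rw [pint_add, map_add, hp, hq]

lemma pderiv_pint_ne (i j : Fin 3) (h : i ≠ j) (p : MvPolynomial (Fin 3) ℝ) :
    pderiv i (pint j p) = pint j (pderiv i p) := by
  induction p using MvPolynomial.induction_on' with
  | monomial a c =>
    rw [pint_monomial, pderiv_monomial, pderiv_monomial, pint_monomial]
    rw [show a + Finsupp.single j 1 - Finsupp.single i 1 =
        a - Finsupp.single i 1 + Finsupp.single j 1 from by
      ext k
      simp only [Finsupp.coe_tsub, Finsupp.coe_add, Pi.sub_apply, Pi.add_apply,
        Finsupp.single_apply]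
      by_cases hjk : j = k <;> by_cases hik : i = k <;> simp_all <;> omega]
    simp only [Finsupp.add_apply, Finsupp.tsub_apply,
      Finsupp.single_eq_of_ne h, Finsupp.single_eq_of_ne (Ne.symm h), Nat.sub_zero]
    congr 1
    push_cast
    ring
  | add p q hp hq => rw [pint_add, map_add, map_add, hp, hq, pint_add]

lemma pint_pderiv_self (j : Fin 3) (p : MvPolynomial (Fin 3) ℝ) :
    pint j (pderiv j p) = p - atZero j p := by
  induction p using MvPolynomial.induction_on' with
  | monomial a c =>
    rw [pderiv_monomial, pint_monomial, atZero_monomial]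
    rcases Nat.eq_zero_or_pos (a j) with h0 | h0
    · rw [if_pos h0]
      simp [h0]
    · rw [if_neg (by omega)]
      rw [show a - Finsupp.single j 1 + Finsupp.single j 1 = a from by
        ext k
        simp only [Finsupp.coe_tsub, Finsupp.coe_add, Pi.sub_apply, Pi.add_apply,
          Finsupp.single_apply]
        split <;> rename_i hh
        · subst hh; omega
        · omega]
      simp only [Finsupp.tsub_apply, Finsupp.single_eq_same, sub_zero]
      congr 1
      have h1 : ((a j - 1 : ℕ) : ℝ) + 1 = (a j : ℝ) := by
        rw [Nat.cast_sub (by omega)]; push_cast; ring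
      rw [h1, mul_div_assoc, div_self (by positivity), mul_one]
  | add p q hp hq => rw [map_add, pint_add, hp, hq, atZero_add]; ring

lemma pderiv_atZero_self (j : Fin 3) (p : MvPolynomial (Fin 3) ℝ) :
    pderiv j (atZero j p) = 0 := by
  induction p using MvPolynomial.induction_on' with
  | monomial a c =>
    rw [atZero_monomial]
    split <;> rename_i hh
    · rw [pderiv_monomial, hh]; simp
    · simp
  | add p q hp hq => rw [atZero_add, map_add, hp, hq, add_zero]

lemma pint_neg (j : Fin 3) (p : MvPolynomial (Fin 3) ℝ) :
    pint j (-p) = -(pint j p) := by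
  have h := pint_add j p (-p)
  have h0 : pint j (0 : MvPolynomial (Fin 3) ℝ) = 0 := by simp [pint]
  rw [add_neg_cancel, h0] at h
  linear_combination -h

lemma totalDegree_pint_le (j : Fin 3) (p : MvPolynomial (Fin 3) ℝ) {d : ℕ}
    (h : p.totalDegree ≤ d) : (pint j p).totalDegree ≤ d + 1 := by
  unfold pint Finsupp.sum
  apply totalDegree_finsetSum_le
  intro a ha
  refine (totalDegree_monomial_le _ _).trans ?_
  have h1 : (a + Finsupp.single j 1).sum (fun _ => id) = (a.sum fun _ => id) + 1 := by
    rw [Finsupp.sum_add_index (by simp) (by simp)]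
    simp [Finsupp.sum_single_index]
  rw [h1]
  have h2 : (a.sum fun _ e => e) ≤ p.totalDegree :=
    Finset.le_sup (f := fun a => a.sum fun _ e => e) ha
  have h3 : (a.sum fun _ => id) = (a.sum fun _ e => e) := rfl
  omega

lemma totalDegree_atZero_le (j : Fin 3) (p : MvPolynomial (Fin 3) ℝ) {d : ℕ}
    (h : p.totalDegree ≤ d) : (atZero j p).totalDegree ≤ d := by
  unfold atZero Finsupp.sum
  apply totalDegree_finsetSum_le
  intro a ha
  dsimp only
  split
  · refine (totalDegree_monomial_le _ _).trans ?_
    exact le_trans (Finset.le_sup (f := fun a => a.sum fun _ e => e) ha) h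
  · simp

lemma pderiv_comm3 (i j : Fin 3) (p : MvPolynomial (Fin 3) ℝ) :
    pderiv i (pderiv j p) = pderiv j (pderiv i p) := by
  rcases eq_or_ne i j with rfl | h
  · rfl
  induction p using MvPolynomial.induction_on' with
  | monomial a c =>
    rw [pderiv_monomial, pderiv_monomial, pderiv_monomial, pderiv_monomial]
    rw [show a - Finsupp.single j 1 - Finsupp.single i 1 =
        a - Finsupp.single i 1 - Finsupp.single j 1 from by
      ext k
      simp only [Finsupp.coe_tsub, Pi.sub_apply, Finsupp.single_apply]
      omega]
    simp only [Finsupp.tsub_apply,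
      Finsupp.single_eq_of_ne h, Finsupp.single_eq_of_ne (Ne.symm h), Nat.sub_zero]
    congr 1
    push_cast
    ring
  | add p q hp hq => simp only [map_add, hp, hq]

/-- In three variables, a vector polynomial `v ∈ (P_s)³` satisfies `div v = 0`
if and only if `v = curl w` for some `w ∈ (P_{s+1})³`. -/
theorem div_eq_zero_iff_curl (s : ℕ) (v : Fin 3 → MvPolynomial (Fin 3) ℝ)
    (hv : ∀ i, (v i).totalDegree ≤ s) :
    pderiv 0 (v 0) + pderiv 1 (v 1) + pderiv 2 (v 2) = 0 ↔
      ∃ w : Fin 3 → MvPolynomial (Fin 3) ℝ, (∀ i, (w i).totalDegree ≤ s + 1) ∧ v = curl3 w := by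
  constructor
  · intro hdiv
    refine ⟨![pint 2 (v 1) - pint 1 (atZero 2 (v 2)), -(pint 2 (v 0)), 0], ?_, ?_⟩
    · intro i
      fin_cases i
      · refine (totalDegree_sub _ _).trans (max_le ?_ ?_)
        · exact totalDegree_pint_le _ _ (hv 1)
        · exact totalDegree_pint_le _ _ (totalDegree_atZero_le _ _ (hv 2))
      · simpa [totalDegree_neg] using totalDegree_pint_le 2 (v 0) (hv 0)
      · simp
    · funext i
      fin_cases i
      · show v 0 = _
        show v 0 = pderiv 1 (0 : MvPolynomial (Fin 3) ℝ) - pderiv 2 (-(pint 2 (v 0)))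
        rw [map_zero, map_neg, pderiv_pint_self]
        ring
      · show v 1 = _
        show v 1 = pderiv 2 (pint 2 (v 1) - pint 1 (atZero 2 (v 2))) -
          pderiv 0 (0 : MvPolynomial (Fin 3) ℝ)
        rw [map_sub, pderiv_pint_self, map_zero,
          pderiv_pint_ne 2 1 (by decide), pderiv_atZero_self]
        simp [pint]
      · show v 2 = _
        show v 2 = pderiv 0 (-(pint 2 (v 0))) -
          pderiv 1 (pint 2 (v 1) - pint 1 (atZero 2 (v 2)))
        rw [map_neg, map_sub, pderiv_pint_ne 0 2 (by decide), pderiv_pint_ne 1 2 (by decide),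
          pderiv_pint_self]
        have h01 : pderiv 0 (v 0) + pderiv 1 (v 1) = -(pderiv 2 (v 2)) := by
          linear_combination hdiv
        have hkey : pint 2 (pderiv 0 (v 0)) + pint 2 (pderiv 1 (v 1)) =
            pint 2 (-(pderiv 2 (v 2))) := by
          rw [← pint_add, h01]
        rw [pint_neg, pint_pderiv_self] at hkey
        linear_combination hkey
  · rintro ⟨w, hw, rfl⟩
    show pderiv 0 (pderiv 1 (w 2) - pderiv 2 (w 1)) +
      pderiv 1 (pderiv 2 (w 0) - pderiv 0 (w 2)) +
      pderiv 2 (pderiv 0 (w 1) - pderiv 1 (w 0)) = 0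
    simp only [map_sub]
    rw [pderiv_comm3 0 1, pderiv_comm3 0 2, pderiv_comm3 1 2]
    ring
end

section
/- If v is a vector field on a simply connected bounded polygon E with div v ∈ P_{k-1}(E), such that ∫_e (v·n) p_k ds = 0 for every edge e of E and every p_k ∈ P_k(e), and ∫_E v · grad q dx = 0 for every q ∈ P_{k-1}(E) with zero mean, then div v = 0 in E and ∫_E v · grad φ dx = 0 for every φ ∈ H^1(E). -/
open MvPolynomial MeasureTheory

section AuxLemmas

/-- Derivative of the evaluation of a multivariate polynomial. -/
theorem hasFDerivAt_mveval (p : MvPolynomial (Fin 2) ℝ) (x : Fin 2 → ℝ) :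
    HasFDerivAt (fun y => eval y p)
      (∑ i, eval x (pderiv i p) • (ContinuousLinearMap.proj i : (Fin 2 → ℝ) →L[ℝ] ℝ)) x := by
  induction p using MvPolynomial.induction_on with
  | C a =>
      simpa [pderiv_C] using hasFDerivAt_const (eval x (C a) : ℝ) x
  | add p q hp hq =>
      have h := hp.add hq
      have heq : (fun y => eval y (p + q)) = fun y => eval y p + eval y q := by
        funext y; simp
      rw [heq]
      refine h.congr_fderiv ?_; symm
      rw [← Finset.sum_add_distrib]
      refine Finset.sum_congr rfl fun i _ => ?_
      rw [map_add, map_add, add_smul]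
  | mul_X p j hp =>
      have hXj : HasFDerivAt (fun y : Fin 2 → ℝ => y j)
          (ContinuousLinearMap.proj j : (Fin 2 → ℝ) →L[ℝ] ℝ) x :=
        (ContinuousLinearMap.proj j : (Fin 2 → ℝ) →L[ℝ] ℝ).hasFDerivAt.congr_fderiv rfl
          |>.congr_of_eventuallyEq (Filter.Eventually.of_forall fun y => rfl)
      have hmul := hp.mul hXj
      have hfun : (fun y => eval y (p * X j)) = fun y : Fin 2 → ℝ => eval y p * y j := by
        funext y; simp
      rw [hfun]
      refine hmul.congr_fderiv ?_; symm
      ext v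
      classical
      simp only [ContinuousLinearMap.add_apply, ContinuousLinearMap.smul_apply,
        ContinuousLinearMap.sum_apply, ContinuousLinearMap.proj_apply, pderiv_mul,
        map_add, map_mul, eval_X, pderiv_X, smul_eq_mul, Pi.single_apply]
      rw [Finset.sum_congr rfl (fun i _ => by rw [add_mul])]
      rw [Finset.sum_add_distrib]
      have h1 : ∑ i, eval x (pderiv i p) * x j * v i
          = x j * ∑ i, eval x (pderiv i p) * v i := by
        rw [Finset.mul_sum]; exact Finset.sum_congr rfl fun i _ => by ring
      have h2 : ∑ i, eval x p * eval x (if j = i then (1 : MvPolynomial (Fin 2) ℝ) else 0) * v i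
          = eval x p * v j := by
        have hterm : ∀ i, eval x p * eval x (if j = i then (1 : MvPolynomial (Fin 2) ℝ) else 0) * v i
            = if j = i then eval x p * v i else 0 := fun i => by split <;> simp
        rw [Finset.sum_congr rfl fun i _ => hterm i, Finset.sum_ite_eq]
        simp
      rw [h1, h2, add_comm]

theorem fderiv_mveval_single (p : MvPolynomial (Fin 2) ℝ) (x : Fin 2 → ℝ) (i : Fin 2) :
    fderiv ℝ (fun y => eval y p) x (Pi.single i 1) = eval x (pderiv i p) := by
  classical
  rw [(hasFDerivAt_mveval p x).fderiv]
  simp only [ContinuousLinearMap.sum_apply, ContinuousLinearMap.smul_apply,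
    ContinuousLinearMap.proj_apply, smul_eq_mul, Pi.single_apply]
  simp [Finset.sum_ite_eq']

theorem contDiff_mveval (p : MvPolynomial (Fin 2) ℝ) :
    ContDiff ℝ 1 (fun y : Fin 2 → ℝ => eval y p) := by
  have h := AnalyticOnNhd.eval_mvPolynomial (𝕜 := ℝ) p
  exact contDiffOn_univ.1 ((h.analyticOn).contDiffOn uniqueDiffOn_univ)

theorem mveval_zero_of_eqOn_open {p : MvPolynomial (Fin 2) ℝ} {U : Set (Fin 2 → ℝ)}
    (hU : IsOpen U) (hne : U.Nonempty) (h : ∀ x ∈ U, eval x p = 0) : p = 0 := by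
  obtain ⟨x0, hx0⟩ := hne
  have hA : AnalyticOnNhd ℝ (fun y => eval y p) Set.univ :=
    AnalyticOnNhd.eval_mvPolynomial (𝕜 := ℝ) p
  have hz : (fun y => eval y p) =ᶠ[nhds x0] 0 :=
    Filter.eventuallyEq_iff_exists_mem.2 ⟨U, hU.mem_nhds hx0, h⟩
  have hEq := hA.eqOn_zero_of_preconnected_of_eventuallyEq_zero isPreconnected_univ
    (Set.mem_univ x0) hz
  refine MvPolynomial.funext fun x => ?_
  simpa using hEq (Set.mem_univ x)

end AuxLemmas

/-- If `v` is a vector field on a simply connected bounded polygon `E` with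
`div v ∈ P_{k-1}(E)`, whose normal trace on each edge `e` is a polynomial `g_j` of degree
`≤ k` (encoded, as usual for `H(div)` fields, through the Green formula
`∫_E v·∇φ = −∫_E (div v) φ + ∫_{∂E} (v·n) φ`), such that `∫_e (v·n) p_k ds = 0` for every
edge `e` and every `p_k ∈ P_k(e)`, and `∫_E v·∇q = 0` for every `q ∈ P_{k-1}(E)` with zero
mean, then `div v = 0` in `E` and `∫_E v·∇φ = 0` for every test function `φ`. -/
theorem div_zero_and_orthogonal_to_gradients
    (k m : ℕ) (V : Fin (m + 3) → (Fin 2 → ℝ)) (E : Set (Fin 2 → ℝ))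
    (hEm : MeasurableSet E) (hEb : Bornology.IsBounded E) (hEi : (interior E).Nonempty)
    (hfr : frontier E = ⋃ j, segment ℝ (V j) (V (j + 1)))
    (v : (Fin 2 → ℝ) → (Fin 2 → ℝ)) (hv : ContinuousOn v (closure E))
    (dv : MvPolynomial (Fin 2) ℝ) (hdv : degLE ((k : ℤ) - 1) dv)
    (gN : Fin (m + 3) → Polynomial ℝ) (hgN : ∀ j, (gN j).natDegree ≤ k)
    -- Green's formula defining `dv = div v` and the normal traces `gN j = v·n` on the edges
    (hGreen : ∀ φ : (Fin 2 → ℝ) → ℝ, ContDiff ℝ 1 φ →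
      (∫ x in E, ∑ i, v x i * fderiv ℝ φ x (Pi.single i 1)) =
        -(∫ x in E, eval x dv * φ x) +
          ∑ j, (∫ t in (0 : ℝ)..1,
              Polynomial.eval t (gN j) * φ (V j + t • (V (j + 1) - V j))) *
            Real.sqrt ((V (j + 1) 0 - V j 0) ^ 2 + (V (j + 1) 1 - V j 1) ^ 2))
    -- the moments of `v·n` of degree up to `k` vanish on every edge
    (hEdge : ∀ j, ∀ p : Polynomial ℝ, p.natDegree ≤ k →
      (∫ t in (0 : ℝ)..1, Polynomial.eval t (gN j) * Polynomial.eval t p) = 0)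
    -- `∫_E v·∇q = 0` for every `q ∈ P_{k-1}(E)` with zero mean on `E`
    (hGradMom : ∀ q : MvPolynomial (Fin 2) ℝ, degLE ((k : ℤ) - 1) q →
      (∫ x in E, eval x q) = 0 →
      (∫ x in E, ∑ i, v x i * eval x (pderiv i q)) = 0) :
    dv = 0 ∧
    ∀ φ : (Fin 2 → ℝ) → ℝ, ContDiff ℝ 1 φ →
      (∫ x in E, ∑ i, v x i * fderiv ℝ φ x (Pi.single i 1)) = 0 := by
  -- Step 0: measure-theoretic facts about `E`
  have hEcl : IsCompact (closure E) := hEb.isCompact_closure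
  have hμfin : volume E < ⊤ := lt_of_le_of_lt (measure_mono subset_closure) hEcl.measure_lt_top
  have hμpos : 0 < volume E :=
    lt_of_lt_of_le (isOpen_interior.measure_pos volume hEi) (measure_mono interior_subset)
  have hμtoReal : (volume E).toReal ≠ 0 := (ENNReal.toReal_pos hμpos.ne' hμfin.ne).ne'
  -- Step 1: the normal traces vanish
  have hgN0 : ∀ j, gN j = 0 := by
    intro j
    by_contra hne
    have h0 := hEdge j (gN j) (hgN j)
    rw [intervalIntegral.integral_of_le zero_le_one] at h0
    have hcont : Continuous fun t => Polynomial.eval t (gN j) * Polynomial.eval t (gN j) :=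
      (gN j).continuous.mul (gN j).continuous
    have hint : IntegrableOn (fun t => Polynomial.eval t (gN j) * Polynomial.eval t (gN j))
        (Set.Ioc (0 : ℝ) 1) := hcont.integrableOn_Ioc
    have hae := (integral_eq_zero_iff_of_nonneg (fun t => mul_self_nonneg _) hint).mp h0
    have hnull : volume
        ({t : ℝ | Polynomial.eval t (gN j) * Polynomial.eval t (gN j) ≠ 0} ∩ Set.Ioc 0 1) = 0 := by
      have h' := hae
      rw [Filter.EventuallyEq, ae_iff] at h'
      rwa [Measure.restrict_apply' measurableSet_Ioc] at h'
    have hsub : Set.Ioc (0 : ℝ) 1 ⊆ {t : ℝ | Polynomial.IsRoot (gN j) t} ∪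
        ({t : ℝ | Polynomial.eval t (gN j) * Polynomial.eval t (gN j) ≠ 0} ∩ Set.Ioc 0 1) := by
      intro t ht
      by_cases hr : Polynomial.eval t (gN j) = 0
      · exact Or.inl hr
      · exact Or.inr ⟨mul_ne_zero hr hr, ht⟩
    have hroots : volume {t : ℝ | Polynomial.IsRoot (gN j) t} = 0 :=
      (Polynomial.finite_setOf_isRoot hne).measure_zero _
    have hz : volume (Set.Ioc (0 : ℝ) 1) = 0 :=
      le_antisymm ((measure_mono hsub).trans ((measure_union_le _ _).trans
        (by rw [hroots, hnull]; simp))) zero_le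
    simp [Real.volume_Ioc] at hz
  -- Step 2: `dv = 0`
  have hdv0 : dv = 0 := by
    rcases Nat.eq_zero_or_pos k with hk | hk
    · subst hk; simpa [degLE] using hdv
    · have hk' : (0 : ℤ) ≤ (k : ℤ) - 1 := by omega
      have hdeg : dv.totalDegree ≤ ((k : ℤ) - 1).toNat := by
        rw [degLE, if_pos hk'] at hdv; exact hdv
      set c : ℝ := (∫ x in E, eval x dv) / (volume E).toReal with hc
      set q : MvPolynomial (Fin 2) ℝ := dv - C c with hq
      have hIdv : IntegrableOn (fun x => eval x dv) E :=
        ((contDiff_mveval dv).continuous.continuousOn.integrableOn_compact hEcl).mono_set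
          subset_closure
      have hq0 : (∫ x in E, eval x q) = 0 := by
        have hfun : (fun x => eval x q) = fun x => eval x dv - c := by
          funext x; simp [hq]
        rw [hfun, integral_sub hIdv (integrableOn_const hμfin.ne), setIntegral_const, measureReal_def,
          smul_eq_mul, hc]
        field_simp
        ring
      have hqdeg : degLE ((k : ℤ) - 1) q := by
        rw [degLE, if_pos hk']
        exact le_trans (totalDegree_sub_C_le dv c) hdeg
      have hA := hGradMom q hqdeg hq0
      have hpd : ∀ i, pderiv i q = pderiv i dv := fun i => by simp [hq]
      simp only [hpd] at hA
      have hG := hGreen (fun y => eval y dv) (contDiff_mveval dv)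
      simp only [fderiv_mveval_single] at hG
      simp only [hgN0, Polynomial.eval_zero, zero_mul, intervalIntegral.integral_zero,
        Finset.sum_const_zero, add_zero] at hG
      rw [hA] at hG
      have hsq : (∫ x in E, eval x dv * eval x dv) = 0 := by linarith
      have hsqint : IntegrableOn (fun x => eval x dv * eval x dv) E :=
        (((contDiff_mveval dv).continuous.mul
          (contDiff_mveval dv).continuous).continuousOn.integrableOn_compact hEcl).mono_set
          subset_closure
      have hae := (integral_eq_zero_iff_of_nonneg (fun x => mul_self_nonneg _) hsqint).mp hsq
      have hnull : volume ({x : Fin 2 → ℝ | eval x dv * eval x dv ≠ 0} ∩ E) = 0 := by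
        have h' := hae
        rw [Filter.EventuallyEq, ae_iff] at h'
        rwa [Measure.restrict_apply' hEm] at h'
      refine mveval_zero_of_eqOn_open isOpen_interior hEi ?_
      intro x hx
      by_contra hxne
      have hUopen : IsOpen (interior E ∩ (fun y : Fin 2 → ℝ => eval y dv) ⁻¹' ({0}ᶜ)) :=
        isOpen_interior.inter (isOpen_compl_singleton.preimage (contDiff_mveval dv).continuous)
      have hUne : (interior E ∩ (fun y : Fin 2 → ℝ => eval y dv) ⁻¹' ({0}ᶜ)).Nonempty :=
        ⟨x, hx, hxne⟩
      have hUpos : 0 < volume (interior E ∩ (fun y : Fin 2 → ℝ => eval y dv) ⁻¹' ({0}ᶜ)) :=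
        hUopen.measure_pos volume hUne
      have hUsub : interior E ∩ (fun y : Fin 2 → ℝ => eval y dv) ⁻¹' ({0}ᶜ) ⊆
          {x : Fin 2 → ℝ | eval x dv * eval x dv ≠ 0} ∩ E := by
        rintro y ⟨h1, h2⟩
        exact ⟨mul_ne_zero h2 h2, interior_subset h1⟩
      have hle := measure_mono (μ := volume) hUsub
      rw [hnull] at hle
      exact hUpos.ne' (le_antisymm hle zero_le)
  -- Conclusion
  refine ⟨hdv0, fun φ hφ => ?_⟩
  have hG := hGreen φ hφ
  simp only [hdv0, map_zero, zero_mul, hgN0, Polynomial.eval_zero,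
    intervalIntegral.integral_zero, Finset.sum_const_zero, integral_zero, neg_zero,
    add_zero] at hG
  exact hG
end
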